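/- Let G be a torsion-free group in which the centralizer Z(a) of every nontrivial element a is a cyclic group. Then for all nontrivial a, b ∈ G, either Z(a) = Z(b) or Z(a) ∩ Z(b) = {1}. -/
import Mathlib

private lemma cent_le_of_comm {G : Type*} [Group G]
    (hcyc : ∀ a : G, a ≠ 1 → IsCyclic (Subgroup.centralizer ({a} : Set G)))
    (x y : G) (hx : x ≠ 1) (hxy : y * x = x * y) :
    Subgroup.centralizer ({x} : Set G) ≤ Subgroup.centralizer ({y} : Set G) := by
  have hcx := hcyc x hx
  have hy : y ∈ Subgroup.centralizer ({x} : Set G) := by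
    rw [Subgroup.mem_centralizer_singleton_iff]
    exact hxy
  intro t ht
  rw [Subgroup.mem_centralizer_singleton_iff]
  obtain ⟨g, hg⟩ := hcx.exists_generator
  obtain ⟨n, hn⟩ := hg ⟨t, ht⟩
  obtain ⟨m, hm⟩ := hg ⟨y, hy⟩
  have hn' : ((g : G)) ^ n = t := by simpa using congrArg Subtype.val hn
  have hm' : ((g : G)) ^ m = y := by simpa using congrArg Subtype.val hm
  rw [← hn', ← hm', ← zpow_add, ← zpow_add, add_comm]

private lemma cent_eq_of_comm {G : Type*} [Group G]
    (hcyc : ∀ a : G, a ≠ 1 → IsCyclic (Subgroup.centralizer ({a} : Set G)))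
    (x y : G) (hx : x ≠ 1) (hy : y ≠ 1) (hxy : y * x = x * y) :
    Subgroup.centralizer ({x} : Set G) = Subgroup.centralizer ({y} : Set G) :=
  le_antisymm (cent_le_of_comm hcyc x y hx hxy) (cent_le_of_comm hcyc y x hy hxy.symm)

/-- In a torsion-free group with cyclic centralizers of nontrivial elements,
two centralizers of nontrivial elements either coincide or intersect trivially. -/
theorem centralizers_eq_or_inter_trivial (G : Type*) [Group G]
    (htf : ∀ g : G, IsOfFinOrder g → g = 1)
    (hcyc : ∀ a : G, a ≠ 1 → IsCyclic (Subgroup.centralizer ({a} : Set G)))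
    (a b : G) (ha : a ≠ 1) (hb : b ≠ 1) :
    Subgroup.centralizer ({a} : Set G) = Subgroup.centralizer ({b} : Set G) ∨
      Subgroup.centralizer ({a} : Set G) ⊓ Subgroup.centralizer ({b} : Set G) = ⊥ := by
  by_cases h : Subgroup.centralizer ({a} : Set G) ⊓ Subgroup.centralizer ({b} : Set G) = ⊥
  · exact Or.inr h
  · left
    obtain ⟨c, hc1⟩ := Subgroup.ne_bot_iff_exists_ne_one.mp h
    obtain ⟨hca, hcb⟩ := Subgroup.mem_inf.mp c.2
    rw [Subgroup.mem_centralizer_singleton_iff] at hca hcb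
    have hc1' : (c : G) ≠ 1 := Subtype.coe_ne_coe.mpr hc1
    calc Subgroup.centralizer ({a} : Set G)
        = Subgroup.centralizer ({(c : G)} : Set G) :=
          (cent_eq_of_comm hcyc c a hc1' ha hca.symm).symm
      _ = Subgroup.centralizer ({b} : Set G) :=
          cent_eq_of_comm hcyc c b hc1' hb hcb.symm
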